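/- Let q ∈ ℝ² and let s be a real number with s > ‖q‖, and let E := {p ∈ ℝ² : ‖p‖ + dist(p, q) = s} be the ellipse with foci 0 and q and string length s. Suppose (a, b, c, d, e) ∈ ℝ⁵ are such that every point (x, y) ∈ E satisfies a·x² + b·y² + c·x·y + d·x + e·y + 1 = 0. Then e² − 4b − d² + 4a = 0 and d·e − 2c = 0. -/

import Mathlib

set_option maxHeartbeats 1000000

lemma mem_aux (q : EuclideanSpace ℝ (Fin 2)) (s x y R : ℝ) (hR0 : 0 ≤ R) (hRs : R ≤ s)
    (h1 : x^2 + y^2 = R^2) (h2 : (x - q 0)^2 + (y - q 1)^2 = (s - R)^2) :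
    ‖(WithLp.equiv 2 (Fin 2 → ℝ)).symm ![x, y]‖
      + dist ((WithLp.equiv 2 (Fin 2 → ℝ)).symm ![x, y]) q = s := by
  rw [EuclideanSpace.norm_eq, EuclideanSpace.dist_eq]
  simp only [WithLp.equiv_symm_apply, PiLp.toLp_apply, Fin.sum_univ_two, Matrix.cons_val_zero,
    Matrix.cons_val_one, Matrix.head_cons, Real.norm_eq_abs, Real.dist_eq, sq_abs]
  rw [h1, h2, Real.sqrt_sq hR0, Real.sqrt_sq (by linarith)]
  ring

theorem focal_condition_of_origin_focus (q : EuclideanSpace ℝ (Fin 2)) (s : ℝ)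
    (hs : s > ‖q‖) (a b c d e : ℝ)
    (hconic : ∀ p ∈ {p : EuclideanSpace ℝ (Fin 2) | ‖p‖ + dist p q = s},
      a * (p 0) ^ 2 + b * (p 1) ^ 2 + c * (p 0) * (p 1) + d * (p 0) + e * (p 1) + 1 = 0) :
    e ^ 2 - 4 * b - d ^ 2 + 4 * a = 0 ∧ d * e - 2 * c = 0 := by
  set q0 := q 0 with hq0def
  set q1 := q 1 with hq1def
  have hnq : ‖q‖ = Real.sqrt (q0^2 + q1^2) := by
    rw [EuclideanSpace.norm_eq]
    simp [Fin.sum_univ_two, Real.norm_eq_abs, sq_abs, hq0def, hq1def]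
  have hQ0 : (0:ℝ) ≤ q0^2 + q1^2 := by positivity
  rw [hnq] at hs
  have hs0 : 0 < s := lt_of_le_of_lt (Real.sqrt_nonneg _) hs
  have hQ : q0^2 + q1^2 < s^2 := by
    nlinarith [Real.sq_sqrt hQ0, Real.sqrt_nonneg (q0^2+q1^2)]
  have hA1 : 0 < s - q0 := by nlinarith [sq_nonneg q1]
  have hA2 : 0 < s + q0 := by nlinarith [sq_nonneg q1]
  have hB1 : 0 < s - q1 := by nlinarith [sq_nonneg q0]
  have hB2 : 0 < s + q1 := by nlinarith [sq_nonneg q0]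
  have hM : 0 < 5*s - 3*q0 - 4*q1 := by nlinarith [sq_nonneg (4*q0 - 3*q1)]
  set D := s^2 - q0^2 - q1^2 with hDdef
  have hD : 0 < D := by simp only [hDdef]; linarith
  -- five points
  have e1 := hconic _ (mem_aux q s (D/(2*(s-q0))) 0 (D/(2*(s-q0)))
    (by positivity) (by rw [div_le_iff₀ (by linarith)]; nlinarith [sq_nonneg (s - q0)])
    (by ring) (by field_simp; ring))
  have e2 := hconic _ (mem_aux q s (-(D/(2*(s+q0)))) 0 (D/(2*(s+q0)))
    (by positivity) (by rw [div_le_iff₀ (by linarith)]; nlinarith [sq_nonneg (s + q0)])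
    (by ring) (by field_simp; ring))
  have e3 := hconic _ (mem_aux q s 0 (D/(2*(s-q1))) (D/(2*(s-q1)))
    (by positivity) (by rw [div_le_iff₀ (by linarith)]; nlinarith [sq_nonneg (s - q1)])
    (by ring) (by field_simp; ring))
  have e4 := hconic _ (mem_aux q s 0 (-(D/(2*(s+q1)))) (D/(2*(s+q1)))
    (by positivity) (by rw [div_le_iff₀ (by linarith)]; nlinarith [sq_nonneg (s + q1)])
    (by ring) (by field_simp; ring))
  have e5 := hconic _ (mem_aux q s (3*D/(2*(5*s - 3*q0 - 4*q1))) (4*D/(2*(5*s - 3*q0 - 4*q1)))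
    (5*D/(2*(5*s - 3*q0 - 4*q1)))
    (by positivity) (by rw [div_le_iff₀ (by linarith)]; nlinarith [sq_nonneg (4*q0 - 3*q1), sq_nonneg (5*s - 3*q0 - 4*q1)])
    (by field_simp; ring) (by field_simp; ring))
  simp only [WithLp.equiv_symm_apply, PiLp.toLp_apply, Matrix.cons_val_zero, Matrix.cons_val_one,
    Matrix.head_cons] at e1 e2 e3 e4 e5
  have hA1' : s - q0 ≠ 0 := ne_of_gt hA1
  have hA2' : s + q0 ≠ 0 := ne_of_gt hA2
  have hB1' : s - q1 ≠ 0 := ne_of_gt hB1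
  have hB2' : s + q1 ≠ 0 := ne_of_gt hB2
  have hM' : 5*s - 3*q0 - 4*q1 ≠ 0 := ne_of_gt hM
  field_simp at e1 e2 e3 e4 e5
  have key : ∀ X Y : ℝ, X ≠ 0 → X * Y = 0 → Y = 0 := fun X Y hX h =>
    (mul_eq_zero.mp h).resolve_left hX
  have hd : d * D = 4 * q0 := by
    have h : (8*(s-q0)*(s+q0)*s) * (d*D - 4*q0) = 0 := by
      linear_combination (s+q0)*(2*(s-q0))*e1 - (s-q0)*(2*(s+q0))*e2
    have := key _ _ (by positivity) h; linarith
  have ha : a * D^2 = 4*q0^2 - 4*s^2 := by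
    have h : (2*(s-q0)) * (a*D^2 - (4*q0^2 - 4*s^2)) = 0 := by
      linear_combination (2*(s-q0))*e1 - 4*(s-q0)^2*hd
    have := key _ _ (by positivity) h; linarith
  have he : e * D = 4 * q1 := by
    have h : (8*(s-q1)*(s+q1)*s) * (e*D - 4*q1) = 0 := by
      linear_combination (s+q1)*(2*(s-q1))*e3 - (s-q1)*(2*(s+q1))*e4
    have := key _ _ (by positivity) h; linarith
  have hb : b * D^2 = 4*q1^2 - 4*s^2 := by
    have h : (2*(s-q1)) * (b*D^2 - (4*q1^2 - 4*s^2)) = 0 := by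
      linear_combination (2*(s-q1))*e3 - 4*(s-q1)^2*he
    have := key _ _ (by positivity) h; linarith
  have hc : c * D^2 = 8*q0*q1 := by
    have hM'' : (s * 5 - q0 * 3 - q1 * 4)^2 ≠ 0 := pow_ne_zero 2 (by intro h; apply hM'; linarith)
    rw [div_add' _ _ _ hM'', div_eq_iff hM''] at e5
    have h : ((2*(5*s-3*q0-4*q1))^4 * 12) * (c*D^2 - 8*q0*q1) = 0 := by
      linear_combination (2*(5*s-3*q0-4*q1))^4 * e5 - (2*(5*s-3*q0-4*q1))^4 * (9*ha + 16*hb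
        + 3*(2*(5*s-3*q0-4*q1))*hd + 4*(2*(5*s-3*q0-4*q1))*he)
    have := key _ _ (by positivity) h; linarith
  have hD2 : D^2 ≠ 0 := by positivity
  constructor
  · have h : (e^2 - 4*b - d^2 + 4*a) * D^2 = 0 := by
      linear_combination (e*D + 4*q1)*he - 4*hb - (d*D + 4*q0)*hd + 4*ha
    exact key _ _ hD2 (by linear_combination h)
  · have h : (d*e - 2*c) * D^2 = 0 := by
      linear_combination e*D*hd + 4*q0*he - 2*hc
    exact key _ _ hD2 (by linear_combination h)
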